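/- Let J be an Artinian monomial ideal or (in characteristic 0) a Borel-fixed monomial ideal in S = K[x_1,...,x_n], with decomposition J = Σ_{j=0}^{α} x_1^j · (I_j · S), I_j = (J : x_1^j) ∩ T. Then h_{S/J}(s) = Σ_{j=0}^{α−1} h_{T/I_j}(s−j) for all s ≥ 0. -/

import Mathlib

open MvPolynomial

/-- A monomial ideal: an ideal generated by monomials. -/
def IsMonomialIdeal {K : Type} [Field K] {m : ℕ} (J : Ideal (MvPolynomial (Fin m) K)) : Prop :=
  ∃ G : Set (Fin m →₀ ℕ), J = Ideal.span ((fun d => (monomial d (1 : K))) '' G)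

/-- `d` is the exponent vector of a minimal monomial generator of the monomial ideal `J`. -/
def IsMinGen {K : Type} [Field K] {m : ℕ} (J : Ideal (MvPolynomial (Fin m) K))
    (d : Fin m →₀ ℕ) : Prop :=
  (monomial d (1 : K)) ∈ J ∧
    ∀ i : Fin m, 0 < d i → (monomial (d - Finsupp.single i 1) (1 : K)) ∉ J

/-- Borel-fixed monomial ideal: stable under the moves `m ↦ (x_j/x_i)·m` for `j < i`. -/
def IsBorelFixed {K : Type} [Field K] {m : ℕ} (J : Ideal (MvPolynomial (Fin m) K)) : Prop :=
  IsMonomialIdeal J ∧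
    ∀ d : Fin m →₀ ℕ, (monomial d (1 : K)) ∈ J → ∀ i j : Fin m, j < i → 0 < d i →
      (monomial (d - Finsupp.single i 1 + Finsupp.single j 1) (1 : K)) ∈ J

/-- The inclusion `K[x_2,...,x_{n+1}] → K[x_1,...,x_{n+1}]` (variable index 0 is `x_1`). -/
noncomputable def varShift (K : Type) [Field K] (n : ℕ) :
    MvPolynomial (Fin n) K →ₐ[K] MvPolynomial (Fin (n + 1)) K :=
  rename Fin.succ

/-- `I_j = (J : x_1^j) ∩ K[x_2,...,x_{n+1}]`, an ideal of `T = K[x_2,...,x_{n+1}]`. -/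
noncomputable def sliceIdeal {K : Type} [Field K] {n : ℕ}
    (J : Ideal (MvPolynomial (Fin (n + 1)) K)) (j : ℕ) : Ideal (MvPolynomial (Fin n) K) :=
  Ideal.comap (varShift K n) (J.colon (Ideal.span {(X 0 : MvPolynomial (Fin (n + 1)) K) ^ j}))

/-- The Hilbert function of `S/J`: the `K`-dimension of the degree `s` part. -/
noncomputable def hilb {K : Type} [Field K] {m : ℕ}
    (J : Ideal (MvPolynomial (Fin m) K)) (s : ℕ) : ℕ :=
  Module.finrank K (homogeneousSubmodule (Fin m) K s) -
    Module.finrank K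
      (homogeneousSubmodule (Fin m) K s ⊓ Submodule.restrictScalars K J :
        Submodule K (MvPolynomial (Fin m) K))

/-- A homogeneous ideal (with respect to total degree). -/
def IsHomogeneousIdeal {K : Type} [Field K] {m : ℕ}
    (I : Ideal (MvPolynomial (Fin m) K)) : Prop :=
  ∀ p ∈ I, ∀ k : ℕ, (homogeneousComponent k p) ∈ I

/-- `α` is the initial degree of `J`: the least degree of a nonzero (homogeneous) element. -/
def IsInitialDegree {K : Type} [Field K] {m : ℕ}
    (J : Ideal (MvPolynomial (Fin m) K)) (α : ℕ) : Prop :=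
  IsLeast {k : ℕ | ∃ p ∈ J, p ≠ 0 ∧ MvPolynomial.IsHomogeneous p k} α

/-- The height (codimension) of an ideal: the infimum of heights of primes containing it. -/
noncomputable def idealHeight {R : Type} [CommRing R] (I : Ideal R) : ℕ∞ :=
  ⨅ (P : PrimeSpectrum R) (_ : I ≤ P.asIdeal), Order.height P

/-- `S/J` is Cohen-Macaulay: there is a regular sequence inside the irrelevant maximal
ideal of length equal to the Krull dimension of `S/J`. -/
def IsCMQuotient {K : Type} [Field K] {m : ℕ} (J : Ideal (MvPolynomial (Fin m) K)) : Prop :=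
  ∃ rs : List (MvPolynomial (Fin m) K),
    (∀ f ∈ rs, f ∈ Ideal.span (Set.range (X : Fin m → MvPolynomial (Fin m) K))) ∧
    RingTheory.Sequence.IsRegular (MvPolynomial (Fin m) K ⧸ J) rs ∧
    (rs.length : WithBot ℕ∞) = ringKrullDim (MvPolynomial (Fin m) K ⧸ J)

/-- An unmixed ideal: all associated primes of `R/I` have the same height, namely that of `I`. -/
def IsUnmixed {K : Type} [Field K] {m : ℕ} (I : Ideal (MvPolynomial (Fin m) K)) : Prop :=
  ∀ P ∈ associatedPrimes (MvPolynomial (Fin m) K) (MvPolynomial (Fin m) K ⧸ I),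
    idealHeight P = idealHeight I

/-- Degree-lexicographic order on exponent vectors: `d > e`. -/
def DegLexGT {m : ℕ} (d e : Fin m →₀ ℕ) : Prop :=
  (e.sum fun _ k => k) < (d.sum fun _ k => k) ∨
    ((d.sum fun _ k => k) = (e.sum fun _ k => k) ∧
      ∃ i : Fin m, (∀ k < i, d k = e k) ∧ e i < d i)

/-- A lex-segment monomial ideal. -/
def IsLexSegment {K : Type} [Field K] {m : ℕ} (J : Ideal (MvPolynomial (Fin m) K)) : Prop :=
  IsMonomialIdeal J ∧
    ∀ d e : Fin m →₀ ℕ, (d.sum fun _ k => k) = (e.sum fun _ k => k) →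
      DegLexGT d e → (monomial e (1 : K)) ∈ J → (monomial d (1 : K)) ∈ J

/-- `macaulayBound d a = a^{⟨d⟩}`, the Macaulay upper bound computed from the `d`-th
binomial expansion of `a`. -/
def macaulayBound : ℕ → ℕ → ℕ
  | _, 0 => 0
  | 0, _ + 1 => 0
  | d + 1, a + 1 =>
    let k := Nat.findGreatest (fun k => Nat.choose k (d + 1) ≤ a + 1) (a + d + 2)
    Nat.choose (k + 1) (d + 2) + macaulayBound d (a + 1 - Nat.choose k (d + 1))

/-- The first difference of a numerical function (with `f(-1) = 0`). -/
def delta (f : ℕ → ℤ) : ℕ → ℤ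
  | 0 => f 0
  | n + 1 => f (n + 1) - f n

/-- An O-sequence: `f(0) = 1`, nonnegative, satisfying Macaulay's growth condition. -/
def IsOSequence (f : ℕ → ℤ) : Prop :=
  f 0 = 1 ∧ (∀ t, 0 ≤ f t) ∧ ∀ t, 1 ≤ t → f (t + 1) ≤ (macaulayBound t (f t).toNat : ℤ)


section Aux
open scoped Classical
variable {K : Type} [Field K] {m : ℕ}

lemma mem_monomialIdeal {J : Ideal (MvPolynomial (Fin m) K)}
    (hJ : ∃ G : Set (Fin m →₀ ℕ), J = Ideal.span ((fun d => (monomial d (1 : K))) '' G))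
    (p : MvPolynomial (Fin m) K) :
    p ∈ J ↔ ∀ d ∈ p.support, (monomial d (1 : K)) ∈ J := by
  classical
  obtain ⟨G, rfl⟩ := hJ
  constructor
  · intro hp d hd
    rw [mem_ideal_span_monomial_image] at hp ⊢
    intro e he
    rw [support_monomial, if_neg one_ne_zero, Finset.mem_singleton] at he
    subst he
    exact hp _ hd
  · intro h
    rw [mem_ideal_span_monomial_image]
    intro d hd
    have := h d hd
    rw [mem_ideal_span_monomial_image] at this
    exact this d (by simp [support_monomial])

lemma monomialIdeal_mono {J : Ideal (MvPolynomial (Fin m) K)}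
    (hJ : ∃ G : Set (Fin m →₀ ℕ), J = Ideal.span ((fun d => (monomial d (1 : K))) '' G))
    {g d : Fin m →₀ ℕ} (hgd : g ≤ d) (hg : (monomial g (1 : K)) ∈ J) :
    (monomial d (1 : K)) ∈ J := by
  classical
  obtain ⟨G, rfl⟩ := hJ
  rw [mem_ideal_span_monomial_image] at hg ⊢
  intro e he
  rw [support_monomial, if_neg one_ne_zero, Finset.mem_singleton] at he
  subst he
  obtain ⟨γ, hγG, hγ⟩ := hg g (by simp [support_monomial])
  exact ⟨γ, hγG, hγ.trans hgd⟩

lemma mem_support_monomial_mul {a d : Fin m →₀ ℕ} {p : MvPolynomial (Fin m) K} :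
    d ∈ (monomial a (1 : K) * p).support ↔ ∃ e ∈ p.support, d = a + e := by
  classical
  rw [mem_support_iff, coeff_monomial_mul', one_mul]
  split_ifs with h
  · constructor
    · intro hc
      exact ⟨d - a, mem_support_iff.mpr hc, (add_tsub_cancel_of_le h).symm⟩
    · rintro ⟨e, he, rfl⟩
      rwa [add_tsub_cancel_left, ← mem_support_iff]
  · simp only [ne_eq, not_true_eq_false, false_iff, not_exists]
    rintro e ⟨he, rfl⟩
    exact h le_self_add

end Aux

section Aux2
open scoped Classical
variable {K : Type} [Field K] {n : ℕ}

lemma single_add_mapDomain (j : ℕ) (e : Fin n →₀ ℕ) :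
    Finsupp.single (0 : Fin (n+1)) j + Finsupp.mapDomain Fin.succ e = Finsupp.cons j e := by
  ext i
  refine Fin.cases ?_ (fun i => ?_) i
  · rw [Finsupp.add_apply, Finsupp.cons_zero, Finsupp.single_eq_same,
      Finsupp.mapDomain_notin_range _ _ (by simp [Fin.succ_ne_zero]), add_zero]
  · rw [Finsupp.add_apply, Finsupp.cons_succ,
      Finsupp.single_eq_of_ne (Fin.succ_ne_zero i),
      Finsupp.mapDomain_apply (Fin.succ_injective n) , zero_add]

lemma mem_sliceIdeal {J : Ideal (MvPolynomial (Fin (n+1)) K)}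
    (hJ : ∃ G : Set (Fin (n+1) →₀ ℕ), J = Ideal.span ((fun d => (monomial d (1 : K))) '' G))
    (j : ℕ) (q : MvPolynomial (Fin n) K) :
    q ∈ sliceIdeal J j ↔ ∀ e ∈ q.support, (monomial (Finsupp.cons j e) (1 : K)) ∈ J := by
  classical
  rw [sliceIdeal, Ideal.mem_comap, Ideal.mem_colon_span_singleton]
  show rename Fin.succ q * X 0 ^ j ∈ J ↔ _
  rw [X_pow_eq_monomial, mul_comm, mem_monomialIdeal hJ]
  constructor
  · intro h e he
    rw [← single_add_mapDomain]
    exact h _ (mem_support_monomial_mul.mpr ⟨_, by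
      rw [support_rename_of_injective (Fin.succ_injective n)]
      exact ⟨Finset.mem_image_of_mem _ he, rfl⟩⟩)
  · intro h d hd
    obtain ⟨e', he', rfl⟩ := mem_support_monomial_mul.mp hd
    rw [support_rename_of_injective (Fin.succ_injective n)] at he'
    obtain ⟨e, he, rfl⟩ := Finset.mem_image.mp he'
    rw [single_add_mapDomain]
    exact h e he

lemma monomial_mem_sliceIdeal {J : Ideal (MvPolynomial (Fin (n+1)) K)}
    (hJ : ∃ G : Set (Fin (n+1) →₀ ℕ), J = Ideal.span ((fun d => (monomial d (1 : K))) '' G))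
    (j : ℕ) (e : Fin n →₀ ℕ) :
    (monomial e (1 : K)) ∈ sliceIdeal J j ↔ (monomial (Finsupp.cons j e) (1 : K)) ∈ J := by
  classical
  rw [mem_sliceIdeal hJ, support_monomial, if_neg one_ne_zero]
  simp

lemma sliceIdeal_memChar {J : Ideal (MvPolynomial (Fin (n+1)) K)}
    (hJ : ∃ G : Set (Fin (n+1) →₀ ℕ), J = Ideal.span ((fun d => (monomial d (1 : K))) '' G))
    (j : ℕ) (q : MvPolynomial (Fin n) K) :
    q ∈ sliceIdeal J j ↔ ∀ e ∈ q.support, (monomial e (1 : K)) ∈ sliceIdeal J j := by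
  rw [mem_sliceIdeal hJ]
  exact forall₂_congr fun e he => (monomial_mem_sliceIdeal hJ j e).symm

lemma degree_eq_sum_univ (d : Fin m →₀ ℕ) : Finsupp.degree d = ∑ i, d i :=
  Finset.sum_subset (Finset.subset_univ _)
    (fun i _ hi => Finsupp.notMem_support_iff.mp hi)

lemma finrank_span_monomials (F : Finset (Fin m →₀ ℕ)) :
    Module.finrank K (Submodule.span K
      ((fun d => monomial d (1 : K)) '' (F : Set (Fin m →₀ ℕ)))) = F.card := by
  classical
  have hinj : Function.Injective (fun d : Fin m →₀ ℕ => monomial d (1 : K)) :=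
    monomial_left_injective one_ne_zero
  have h1 := (basisMonomials (Fin m) K).linearIndependent
  rw [coe_basisMonomials] at h1
  have hf : LinearIndependent K (fun d : ↥(F : Set (Fin m →₀ ℕ)) =>
      monomial (d : Fin m →₀ ℕ) (1 : K)) :=
    h1.comp Subtype.val Subtype.val_injective
  have hrange : Set.range (fun d : ↥(F : Set (Fin m →₀ ℕ)) =>
      monomial (d : Fin m →₀ ℕ) (1 : K)) =
      ((F.image fun d => monomial d (1 : K)) : Set (MvPolynomial (Fin m) K)) := by
    rw [show (fun d : ↥(F : Set (Fin m →₀ ℕ)) => monomial (d : Fin m →₀ ℕ) (1 : K)) =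
      (fun d => monomial d (1 : K)) ∘ Subtype.val from rfl, Set.range_comp,
      Subtype.range_coe, Finset.coe_image]
  have hli : LinearIndepOn K id
      ((F.image fun d => monomial d (1 : K)) : Set (MvPolynomial (Fin m) K)) :=
    hrange ▸ hf.linearIndepOn_id
  rw [← Finset.coe_image, finrank_span_set_eq_card hli, Finset.toFinset_coe,
    Finset.card_image_of_injective _ hinj]

lemma hilb_eq_card (I : Ideal (MvPolynomial (Fin m) K))
    (hmem : ∀ p : MvPolynomial (Fin m) K, p ∈ I ↔ ∀ d ∈ p.support, monomial d (1 : K) ∈ I)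
    (s : ℕ) :
    hilb I s = ((Finset.finsuppAntidiag (Finset.univ : Finset (Fin m)) s).filter
      (fun d => monomial d (1 : K) ∉ I)).card := by
  classical
  set D := Finset.finsuppAntidiag (Finset.univ : Finset (Fin m)) s with hD
  set A := D.filter (fun d => monomial d (1 : K) ∈ I) with hA
  have hmemD : ∀ d : Fin m →₀ ℕ, d ∈ D ↔ Finsupp.degree d = s := by
    intro d
    simp [hD, Finset.mem_finsuppAntidiag, degree_eq_sum_univ]
  -- V = span of monomials over D
  have hV : homogeneousSubmodule (Fin m) K s =
      Submodule.span K ((fun d => monomial d (1 : K)) '' (D : Set (Fin m →₀ ℕ))) := by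
    apply le_antisymm
    · intro p hp
      rw [mem_homogeneousSubmodule] at hp
      rw [← support_sum_monomial_coeff p]
      apply Submodule.sum_mem
      intro d hd
      have hdeg : Finsupp.degree d = s := by
        have := hp (mem_support_iff.mp hd)
        rw [Finsupp.degree_eq_weight_one]; exact this
      have : monomial d (coeff d p) = (coeff d p) • monomial d (1 : K) := by
        rw [smul_monomial, smul_eq_mul, mul_one]
      rw [this]
      exact Submodule.smul_mem _ _ (Submodule.subset_span ⟨d, (hmemD d).mpr hdeg, rfl⟩)
    · rw [Submodule.span_le]
      rintro _ ⟨d, hd, rfl⟩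
      exact isHomogeneous_monomial _ ((hmemD d).mp hd)
  have hW : (homogeneousSubmodule (Fin m) K s ⊓ Submodule.restrictScalars K I :
      Submodule K (MvPolynomial (Fin m) K)) =
      Submodule.span K ((fun d => monomial d (1 : K)) '' (A : Set (Fin m →₀ ℕ))) := by
    apply le_antisymm
    · intro p hp
      rw [Submodule.mem_inf] at hp
      obtain ⟨hp1, hp2⟩ := hp
      rw [mem_homogeneousSubmodule] at hp1
      rw [Submodule.restrictScalars_mem] at hp2
      rw [← support_sum_monomial_coeff p]
      apply Submodule.sum_mem
      intro d hd
      have hdeg : Finsupp.degree d = s := by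
        have := hp1 (mem_support_iff.mp hd)
        rw [Finsupp.degree_eq_weight_one]; exact this
      have hdI : monomial d (1 : K) ∈ I := (hmem p).mp hp2 d hd
      have : monomial d (coeff d p) = (coeff d p) • monomial d (1 : K) := by
        rw [smul_monomial, smul_eq_mul, mul_one]
      rw [this]
      refine Submodule.smul_mem _ _ (Submodule.subset_span ⟨d, ?_, rfl⟩)
      rw [hA, Finset.mem_coe, Finset.mem_filter]
      exact ⟨(hmemD d).mpr hdeg, hdI⟩
    · rw [Submodule.span_le]
      rintro _ ⟨d, hd, rfl⟩
      rw [hA, Finset.mem_coe, Finset.mem_filter] at hd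
      exact ⟨isHomogeneous_monomial _ ((hmemD d).mp hd.1), hd.2⟩
  rw [hilb, hW, hV, finrank_span_monomials, finrank_span_monomials]
  have h2 := Finset.card_filter_add_card_filter_not
    (s := D) (p := fun d => monomial d (1 : K) ∈ I)
  have h3 : (D.filter (fun d => ¬ monomial d (1 : K) ∈ I)).card =
      (D.filter (fun d => monomial d (1 : K) ∉ I)).card := by
    simp only [Finset.filter_congr_decidable]
  rw [← hA] at h2
  omega

lemma exists_pow_mem {J : Ideal (MvPolynomial (Fin (n+1)) K)}
    (hJ : ∃ G : Set (Fin (n+1) →₀ ℕ), J = Ideal.span ((fun d => (monomial d (1 : K))) '' G))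
    (hfin : Module.Finite K (MvPolynomial (Fin (n + 1)) K ⧸ J)) :
    ∃ k : ℕ, (monomial (Finsupp.single (0 : Fin (n+1)) k) (1 : K)) ∈ J := by
  by_contra hcon
  push_neg at hcon
  have hnl := Module.Finite.not_linearIndependent_of_infinite
    (R := K) (v := fun k : ℕ => Ideal.Quotient.mkₐ K J ((X 0 : MvPolynomial (Fin (n+1)) K) ^ k))
  rw [linearIndependent_iff] at hnl
  push_neg at hnl
  obtain ⟨l, hl0, hl⟩ := hnl
  set p : MvPolynomial (Fin (n+1)) K :=
    Finsupp.linearCombination K (fun k : ℕ => (X 0 : MvPolynomial (Fin (n+1)) K) ^ k) l with hp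
  have hpJ : p ∈ J := by
    rw [← Ideal.Quotient.eq_zero_iff_mem (I := J)]
    have := Finsupp.apply_linearCombination K ((Ideal.Quotient.mkₐ K J).toLinearMap)
      (fun k : ℕ => (X 0 : MvPolynomial (Fin (n+1)) K) ^ k) l
    rw [hp]
    exact this.trans hl0
  obtain ⟨k₀, hk₀⟩ := Finsupp.ne_iff.mp hl
  rw [Finsupp.coe_zero, Pi.zero_apply] at hk₀
  have hcoeff : coeff (Finsupp.single (0 : Fin (n+1)) k₀) p = l k₀ := by
    rw [hp, Finsupp.linearCombination_apply, Finsupp.sum, coeff_sum]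
    have : ∀ k ∈ l.support,
        coeff (Finsupp.single (0 : Fin (n+1)) k₀) (l k • (X 0 : MvPolynomial (Fin (n+1)) K) ^ k)
        = if k = k₀ then l k else 0 := by
      intro k _
      rw [X_pow_eq_monomial, smul_monomial, smul_eq_mul, mul_one, coeff_monomial]
      by_cases h : k = k₀
      · subst h; simp
      · rw [if_neg (fun hs => h (by
          have := congrArg (fun f : Fin (n+1) →₀ ℕ => f 0) hs
          simpa using this)), if_neg h]
    rw [Finset.sum_congr rfl this, Finset.sum_ite_eq' l.support k₀ (fun k => l k),
      if_pos (Finsupp.mem_support_iff.mpr hk₀)]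
  exact hcon k₀ ((mem_monomialIdeal hJ p).mp hpJ _
    (mem_support_iff.mpr (by rw [hcoeff]; exact hk₀)))

/-- Borel-fixed case: push all exponents onto `x_1`. -/

lemma borel_push {J : Ideal (MvPolynomial (Fin (n+1)) K)}
    (hB : ∀ d : Fin (n+1) →₀ ℕ, (monomial d (1 : K)) ∈ J → ∀ i j : Fin (n+1), j < i → 0 < d i →
      (monomial (d - Finsupp.single i 1 + Finsupp.single j 1) (1 : K)) ∈ J) :
    ∀ (t : ℕ) (d : Fin (n+1) →₀ ℕ), (∑ i, d i) - d 0 ≤ t → (monomial d (1 : K)) ∈ J →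
      (monomial (Finsupp.single (0 : Fin (n+1)) (∑ i, d i)) (1 : K)) ∈ J := by
  intro t
  induction t with
  | zero =>
    intro d hle hd
    have hsum : ∑ i, d i = d 0 + ∑ i : Fin n, d i.succ := Fin.sum_univ_succ d
    have htail : ∀ i : Fin n, d i.succ = 0 := by
      have h0 : d 0 ≤ ∑ i, d i := by
        rw [hsum]; exact Nat.le_add_right _ _
      have : ∑ i : Fin n, d i.succ = 0 := by omega
      intro i
      exact Finset.sum_eq_zero_iff.mp this i (Finset.mem_univ i)
    have hd' : d = Finsupp.single (0 : Fin (n+1)) (∑ i, d i) := by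
      ext i
      refine Fin.cases ?_ (fun i => ?_) i
      · rw [Finsupp.single_eq_same]; omega
      · rw [Finsupp.single_eq_of_ne (Fin.succ_ne_zero i)]
        exact htail i
    rw [← hd']; exact hd
  | succ t ih =>
    intro d hle hd
    by_cases hc : (∑ i, d i) - d 0 ≤ t
    · exact ih d hc hd
    · -- there is a positive entry off 0
      have hpos : ∃ i : Fin n, 0 < d i.succ := by
        by_contra hno
        push_neg at hno
        have : ∀ i : Fin n, d i.succ = 0 := fun i => Nat.le_zero.mp (hno i)
        have hsum : ∑ i, d i = d 0 + ∑ i : Fin n, d i.succ := Fin.sum_univ_succ d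
        simp only [this, Finset.sum_const_zero, add_zero] at hsum
        omega
      obtain ⟨i, hi⟩ := hpos
      have hd2 := hB d hd i.succ 0 (Fin.succ_pos i) hi
      set e : Fin (n+1) →₀ ℕ := d - Finsupp.single i.succ 1 with he
      set d' := e + Finsupp.single (0 : Fin (n+1)) 1 with hd'def
      have hsle : Finsupp.single i.succ 1 ≤ d := Finsupp.single_le_iff.mpr hi
      have hrec : e + Finsupp.single i.succ 1 = d :=
        tsub_add_cancel_of_le hsle
      have hsum_sub : (∑ j, e j) + 1 = ∑ j, d j := by
        have := congrArg (fun f : Fin (n+1) →₀ ℕ => ∑ j, f j) hrec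
        simp only [Finsupp.add_apply, Finset.sum_add_distrib] at this
        have hsing : ∑ j, Finsupp.single i.succ 1 j = 1 := by
          simp [Finsupp.single_apply]
        omega
      have hsum' : ∑ j, d' j = ∑ j, d j := by
        rw [hd'def]
        simp only [Finsupp.add_apply, Finset.sum_add_distrib]
        have hsing : ∑ j, Finsupp.single (0 : Fin (n+1)) 1 j = 1 := by
          simp [Finsupp.single_apply]
        omega
      have hzero' : d' 0 = d 0 + 1 := by
        rw [hd'def]
        rw [Finsupp.add_apply, Finsupp.single_eq_same, he, Finsupp.tsub_apply,
          Finsupp.single_eq_of_ne (Fin.succ_ne_zero i).symm, Nat.sub_zero]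
      have := ih d' (by omega) hd2
      rwa [hsum'] at this

lemma pow_alpha_mem {J : Ideal (MvPolynomial (Fin (n+1)) K)} {α : ℕ}
    (hJ : ∃ G : Set (Fin (n+1) →₀ ℕ), J = Ideal.span ((fun d => (monomial d (1 : K))) '' G))
    (hmax : ∀ d, IsMinGen J d → d 0 ≤ α)
    (h : ∃ k : ℕ, (monomial (Finsupp.single (0 : Fin (n+1)) k) (1 : K)) ∈ J) :
    (monomial (Finsupp.single (0 : Fin (n+1)) α) (1 : K)) ∈ J := by
  classical
  set k := Nat.find h with hk
  have hkJ : (monomial (Finsupp.single (0 : Fin (n+1)) k) (1 : K)) ∈ J := Nat.find_spec h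
  have hmin : IsMinGen J (Finsupp.single (0 : Fin (n+1)) k) := by
    refine ⟨hkJ, fun i hi => ?_⟩
    have hi0 : i = 0 := by
      by_contra hne
      rw [Finsupp.single_eq_of_ne hne] at hi
      exact Nat.lt_irrefl 0 hi
    subst hi0
    rw [Finsupp.single_eq_same] at hi
    rw [← Finsupp.single_tsub]
    have := Nat.find_min h (m := k - 1) (by omega)
    simpa using this
  have hkα : k ≤ α := by
    have := hmax _ hmin
    rwa [Finsupp.single_eq_same] at this
  exact monomialIdeal_mono hJ
    (by rw [Finsupp.single_le_iff, Finsupp.single_eq_same]; exact hkα) hkJ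

end Aux2

/-- Hilbert function formula in the Artinian or Borel-fixed case. -/
theorem hilbert_function_decomposition' {K : Type} [Field K] {n : ℕ} (α : ℕ)
    (J : Ideal (MvPolynomial (Fin (n + 1)) K))
    (hJ : IsMonomialIdeal J)
    (hAB : Module.Finite K (MvPolynomial (Fin (n + 1)) K ⧸ J) ∨
      (CharZero K ∧ IsBorelFixed J))
    (hex : ∃ d, IsMinGen J d ∧ d 0 = α)
    (hmax : ∀ d, IsMinGen J d → d 0 ≤ α) :
    ∀ s : ℕ, hilb J s =
      ∑ j ∈ Finset.range α, if j ≤ s then hilb (sliceIdeal J j) (s - j) else 0 := by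
  
  classical
  have hJ' : ∃ G : Set (Fin (n+1) →₀ ℕ), J = Ideal.span ((fun d => (monomial d (1 : K))) '' G) :=
    hJ
  have hx : (monomial (Finsupp.single (0 : Fin (n+1)) α) (1 : K)) ∈ J := by
    rcases hAB with hfin | ⟨-, -, hB⟩
    · exact pow_alpha_mem hJ' hmax (exists_pow_mem hJ' hfin)
    · obtain ⟨d, hdmin, hd0⟩ := hex
      exact pow_alpha_mem hJ' hmax
        ⟨∑ i, d i, borel_push hB (∑ i, d i) d (Nat.sub_le _ _) hdmin.1⟩
  intro s
  rw [hilb_eq_card J (mem_monomialIdeal hJ') s]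
  set S1 := ((Finset.finsuppAntidiag (Finset.univ : Finset (Fin (n+1))) s).filter
    (fun d => monomial d (1 : K) ∉ J)) with hS1
  have hfib : ∀ d ∈ S1, d 0 ∈ Finset.range α := by
    intro d hd
    rw [hS1, Finset.mem_filter] at hd
    rw [Finset.mem_range]
    by_contra hcon
    push_neg at hcon
    exact hd.2 (monomialIdeal_mono hJ'
      (by rw [Finsupp.single_le_iff]; exact hcon) hx)
  rw [Finset.card_eq_sum_card_fiberwise hfib]
  apply Finset.sum_congr rfl
  intro j hj
  by_cases hjs : j ≤ s
  · rw [if_pos hjs, hilb_eq_card _ (sliceIdeal_memChar hJ' j) (s - j)]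
    apply Finset.card_nbij' (i := Finsupp.tail) (j := Finsupp.cons j)
    · intro d hd
      rw [Finset.mem_coe, Finset.mem_filter, hS1, Finset.mem_filter, Finset.mem_finsuppAntidiag] at hd
      obtain ⟨⟨⟨hsum, -⟩, hdJ⟩, hd0⟩ := hd
      rw [Finset.mem_coe, Finset.mem_filter, Finset.mem_finsuppAntidiag]
      have hdec : (∑ i, d i) = d 0 + ∑ i : Fin n, d i.succ := Fin.sum_univ_succ d
      refine ⟨⟨?_, Finset.subset_univ _⟩, ?_⟩
      · have : ∀ i : Fin n, Finsupp.tail d i = d i.succ := fun i => Finsupp.tail_apply i d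
        calc Finset.univ.sum ⇑(Finsupp.tail d) = ∑ i : Fin n, d i.succ :=
              Finset.sum_congr rfl (fun i _ => this i)
          _ = s - j := by
              have hsum' : (∑ i, d i) = s := hsum
              omega
      · intro hmem
        rw [monomial_mem_sliceIdeal hJ'] at hmem
        rw [← hd0, Finsupp.cons_tail] at hmem
        exact hdJ hmem
    · intro e he
      rw [Finset.mem_coe, Finset.mem_filter, Finset.mem_finsuppAntidiag] at he
      obtain ⟨⟨hsum, -⟩, heI⟩ := he
      rw [Finset.mem_coe, Finset.mem_filter, hS1, Finset.mem_filter, Finset.mem_finsuppAntidiag]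
      have hdec : Finset.univ.sum ⇑(Finsupp.cons j e) = j + ∑ i : Fin n, e i := by
        simp [Fin.sum_univ_succ, Finsupp.cons_succ]
      refine ⟨⟨⟨?_, Finset.subset_univ _⟩, ?_⟩, Finsupp.cons_zero j e⟩
      · have hs' : (∑ i, e i) = s - j := hsum
        rw [hdec]
        omega
      · intro hmem
        exact heI ((monomial_mem_sliceIdeal hJ' j e).mpr hmem)
    · intro d hd
      rw [Finset.mem_coe, Finset.mem_filter] at hd
      rw [← hd.2]
      exact Finsupp.cons_tail d
    · intro e _
      exact Finsupp.tail_cons j e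
  · rw [if_neg hjs, Finset.card_eq_zero]
    rw [Finset.eq_empty_iff_forall_notMem]
    intro d hd
    rw [Finset.mem_filter, hS1, Finset.mem_filter, Finset.mem_finsuppAntidiag] at hd
    obtain ⟨⟨⟨hsum, -⟩, -⟩, hd0⟩ := hd
    have h1 : d 0 ≤ Finset.univ.sum ⇑d := Finset.single_le_sum (f := ⇑d)
      (fun i _ => Nat.zero_le _) (Finset.mem_univ 0)
    rw [hsum] at h1
    omega
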